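/- Let N, D be positive natural numbers and n = N·D. Let 𝕂 be a real symmetric n×n matrix, Δ a real diagonal n×n matrix with 𝕂 + Δ invertible, and set Ω := (𝕂 + Δ)⁻¹. Let M be the N×n matrix formed by the first N rows of 𝕂, let m₁ ∈ ℝᴺ, m ∈ ℝⁿ, y ∈ ℝⁿ, and let Σ₁₁ be a real symmetric positive definite N×N matrix. Define the marginal posterior means μ₁ := m₁ + M·Ω·(y − m) and, for a contaminated observation vector yᶜ := y + δ·e_j (with j ∈ {1,…,n}, δ ∈ ℝ, and e_j the j-th standard basis vector), μ₁ᶜ := m₁ + M·Ω·(yᶜ − m). Then the Kullback–Leibler divergence between the multivariate Gaussian measures N(μ₁, Σ₁₁) and N(μ₁ᶜ, Σ₁₁) on ℝᴺ equals ENNReal.ofReal( C₁·δ² ), where C₁ := (1/2)·[ Ωᵀ Mᵀ Σ₁₁⁻¹ M Ω ]_{jj} ≥ 0 does not depend on δ. In particular, the posterior influence function of a standard multi-output Gaussian process grows quadratically—and hence unboundedly—in the contamination magnitude whenever C₁ > 0, so the standard MOGP is not robust to outliers. -/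

import Mathlib

open Matrix MeasureTheory

open Classical in
/-- The Kullback–Leibler divergence `∫ log(dμ/dν) dμ` when `μ ≪ ν` with integrable
log-density, and `∞` otherwise. -/
noncomputable def klDiv {α : Type*} [MeasurableSpace α] (μ ν : Measure α) : ENNReal :=
  if μ ≪ ν ∧ Integrable (MeasureTheory.llr μ ν) μ then
    ENNReal.ofReal (∫ x, MeasureTheory.llr μ ν x ∂μ)
  else ⊤

/-- The multivariate Gaussian measure `N(μ, Σ)` on `ℝᴺ`, given by its density with
respect to Lebesgue measure. -/
noncomputable def multivariateGaussian {N : ℕ} (μv : Fin N → ℝ)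
    (S : Matrix (Fin N) (Fin N) ℝ) : Measure (Fin N → ℝ) :=
  volume.withDensity fun x =>
    ENNReal.ofReal ((Real.sqrt ((2 * Real.pi) ^ N * S.det))⁻¹ *
      Real.exp (-(1 / 2 : ℝ) * ((x - μv) ⬝ᵥ (S⁻¹ *ᵥ (x - μv)))))

lemma int_gauss1 : ∫ x : ℝ, Real.exp (-(1/2) * x^2) = Real.sqrt (2 * Real.pi) := by
  have h := integral_gaussian (1/2 : ℝ)
  rwa [show Real.pi/(1/2) = 2*Real.pi by ring, show (-(1/2:ℝ)) = -(1/2:ℝ) from rfl] at h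

lemma int_gauss0 : ∫ x : ℝ, x * Real.exp (-(1/2) * x^2) = 0 := by
  have h := MeasureTheory.integral_neg_eq_self (fun x : ℝ => x * Real.exp (-(1/2) * x^2)) volume
  have h2 : ∫ x : ℝ, -(x * Real.exp (-(1/2) * x^2)) = ∫ x : ℝ, x * Real.exp (-(1/2) * x^2) := by
    rw [← h]; congr 1; funext x; ring_nf
  rw [integral_neg] at h2
  linarith

lemma intg_gauss1 : Integrable (fun x : ℝ => Real.exp (-(1/2) * x^2)) := by
  simpa using integrable_exp_neg_mul_sq (by norm_num : (0:ℝ) < 1/2)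

lemma intg_gauss0 : Integrable (fun x : ℝ => x * Real.exp (-(1/2) * x^2)) := by
  simpa using integrable_mul_exp_neg_mul_sq (by norm_num : (0:ℝ) < 1/2)


variable {N : ℕ}

noncomputable def affEquiv (B : Matrix (Fin N) (Fin N) ℝ) (hB : B.det ≠ 0) (a : Fin N → ℝ) :
    (Fin N → ℝ) ≃ᵐ (Fin N → ℝ) := by
  have hI : Invertible B := B.invertibleOfIsUnitDet hB.isUnit
  exact (Homeomorph.trans
    { (Matrix.toLinearEquiv' B hI).toEquiv with
      continuous_toFun := LinearMap.continuous_on_pi _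
      continuous_invFun := (LinearMap.continuous_on_pi ((Matrix.toLinearEquiv' B hI).symm : (Fin N → ℝ) →ₗ[ℝ] (Fin N → ℝ)) :) }
    (Homeomorph.addLeft a)).toMeasurableEquiv

lemma affEquiv_apply (B : Matrix (Fin N) (Fin N) ℝ) (hB : B.det ≠ 0) (a : Fin N → ℝ)
    (x : Fin N → ℝ) : affEquiv B hB a x = a + B *ᵥ x := rfl

lemma map_affEquiv (B : Matrix (Fin N) (Fin N) ℝ) (hB : B.det ≠ 0) (a : Fin N → ℝ) :
    Measure.map (affEquiv B hB a) volume = ENNReal.ofReal |B.det|⁻¹ • volume := by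
  have h1 : (affEquiv B hB a : (Fin N → ℝ) → (Fin N → ℝ))
      = (fun y => a + y) ∘ (Matrix.toLin' B) := by
    funext x; simp [affEquiv_apply, Matrix.toLin'_apply]
  rw [h1, ← Measure.map_map (measurable_const_add a)
    (LinearMap.continuous_on_pi _).measurable,
    Real.map_matrix_volume_pi_eq_smul_volume_pi hB, Measure.map_smul,
    map_add_left_eq_self, abs_inv]

lemma aff_integrable_iff {B : Matrix (Fin N) (Fin N) ℝ} (hB : B.det ≠ 0) (a : Fin N → ℝ)
    (f : (Fin N → ℝ) → ℝ) :
    Integrable (fun x => f (a + B *ᵥ x)) volume ↔ Integrable f volume := by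
  have h := (affEquiv B hB a).measurableEmbedding.integrable_map_iff
    (μ := (volume : Measure (Fin N → ℝ))) (g := f)
  rw [map_affEquiv B hB a] at h
  have hc : ENNReal.ofReal |B.det|⁻¹ ≠ 0 := by
    simp [ENNReal.ofReal_eq_zero, not_le, abs_pos, hB]
  rw [integrable_smul_measure hc (by simp)] at h
  have : (f ∘ (affEquiv B hB a)) = fun x => f (a + B *ᵥ x) := rfl
  rw [this] at h
  exact h.symm

lemma aff_integral {B : Matrix (Fin N) (Fin N) ℝ} (hB : B.det ≠ 0) (a : Fin N → ℝ)
    (f : (Fin N → ℝ) → ℝ) :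
    ∫ x, f x = |B.det| * ∫ x, f (a + B *ᵥ x) := by
  have h := (affEquiv B hB a).measurableEmbedding.integral_map
    (μ := (volume : Measure (Fin N → ℝ))) f
  rw [map_affEquiv B hB a, integral_smul_measure] at h
  have habs : 0 < |B.det| := abs_pos.mpr hB
  rw [ENNReal.toReal_ofReal (by positivity)] at h
  simp only [affEquiv_apply, smul_eq_mul] at h
  rw [← h]
  field_simp


lemma sqrt_pow' (x : ℝ) (hx : 0 ≤ x) (n : ℕ) : Real.sqrt (x ^ n) = (Real.sqrt x) ^ n := by
  rw [show x ^ n = ((Real.sqrt x)^n)^2 by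
    rw [← pow_mul, mul_comm, pow_mul, Real.sq_sqrt hx], Real.sqrt_sq (by positivity)]

variable {N : ℕ}

lemma mulVec_dot (A : Matrix (Fin N) (Fin N) ℝ) (x y : Fin N → ℝ) :
    (A *ᵥ x) ⬝ᵥ y = x ⬝ᵥ (Aᵀ *ᵥ y) := by
  rw [dotProduct_comm, Matrix.dotProduct_mulVec, ← Matrix.vecMul_transpose,
    Matrix.transpose_transpose, dotProduct_comm]

section density

variable (S : Matrix (Fin N) (Fin N) ℝ) (hS : S.PosDef)

/-- the Gaussian density -/
noncomputable def gDen (a : Fin N → ℝ) (x : Fin N → ℝ) : ℝ :=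
  (Real.sqrt ((2 * Real.pi) ^ N * S.det))⁻¹ *
    Real.exp (-(1 / 2 : ℝ) * ((x - a) ⬝ᵥ (S⁻¹ *ᵥ (x - a))))

lemma gDen_continuous (a : Fin N → ℝ) : Continuous (gDen S a) := by
  unfold gDen
  have : Continuous fun x : Fin N → ℝ => (x - a) ⬝ᵥ (S⁻¹ *ᵥ (x - a)) := by
    simp only [dotProduct, Matrix.mulVec]; fun_prop
  fun_prop

lemma gDen_pos (hS : S.PosDef) (a x : Fin N → ℝ) : 0 < gDen S a x := by
  unfold gDen
  have h1 : 0 < (2 * Real.pi) ^ N * S.det :=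
    mul_pos (pow_pos (by positivity) N) hS.det_pos
  positivity

-- the square root matrix
open scoped Matrix.Norms.L2Operator MatrixOrder in
noncomputable def sqA (hS : S.PosDef) : Matrix (Fin N) (Fin N) ℝ := CFC.sqrt S

open scoped Matrix.Norms.L2Operator MatrixOrder in
lemma sqA_mul_self : (sqA S hS) * (sqA S hS) = S := CFC.sqrt_mul_sqrt_self S hS.posSemidef.nonneg

open scoped Matrix.Norms.L2Operator MatrixOrder in
lemma sqA_transpose : (sqA S hS)ᵀ = sqA S hS := by
  have h := (CFC.sqrt_nonneg S).posSemidef.1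
  simpa [sqA, Matrix.IsHermitian, Matrix.conjTranspose_eq_transpose_of_trivial] using h

lemma sqA_det_sq : (sqA S hS).det ^ 2 = S.det := by
  rw [sq, ← Matrix.det_mul, sqA_mul_self]

lemma sqA_det_ne_zero : (sqA S hS).det ≠ 0 := by
  intro h
  have := sqA_det_sq S hS
  rw [h] at this
  exact hS.det_pos.ne' (by linarith [this.symm])

lemma sqA_abs_det : |(sqA S hS).det| = Real.sqrt S.det := by
  rw [← sqA_det_sq S hS, Real.sqrt_sq_eq_abs]

lemma sqA_quad (x : Fin N → ℝ) :
    ((sqA S hS) *ᵥ x) ⬝ᵥ (S⁻¹ *ᵥ ((sqA S hS) *ᵥ x)) = x ⬝ᵥ x := by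
  set A := sqA S hS with hA
  have hdet : A.det ≠ 0 := sqA_det_ne_zero S hS
  have hSinv : S⁻¹ = A⁻¹ * A⁻¹ := by rw [← sqA_mul_self S hS, Matrix.mul_inv_rev]
  rw [hSinv, Matrix.mulVec_mulVec, mul_assoc, Matrix.nonsing_inv_mul A hdet.isUnit, mul_one,
    mulVec_dot, sqA_transpose S hS, ← hA, Matrix.mulVec_mulVec,
    Matrix.mul_nonsing_inv A hdet.isUnit, Matrix.one_mulVec]

end density

section integrals
variable (S : Matrix (Fin N) (Fin N) ℝ) (hS : S.PosDef) (a : Fin N → ℝ)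

lemma gDen_comp (x : Fin N → ℝ) :
    gDen S a (a + (sqA S hS) *ᵥ x)
      = (Real.sqrt ((2 * Real.pi) ^ N * S.det))⁻¹ * ∏ i, Real.exp (-(1/2) * (x i)^2) := by
  unfold gDen
  rw [add_sub_cancel_left, sqA_quad S hS]
  congr 1
  rw [← Real.exp_sum]
  congr 1
  unfold dotProduct
  rw [Finset.mul_sum]
  congr 1; funext i; ring

lemma const_val : (Real.sqrt ((2 * Real.pi) ^ N * S.det))⁻¹
    = ((Real.sqrt (2 * Real.pi)) ^ N)⁻¹ * (Real.sqrt S.det)⁻¹ := by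
  rw [Real.sqrt_mul (by positivity), sqrt_pow' _ (by positivity), mul_inv]

lemma gDen_integrable (hS : S.PosDef) : Integrable (gDen S a) volume := by
  rw [← aff_integrable_iff (sqA_det_ne_zero S hS) a]
  have : (fun x => gDen S a (a + (sqA S hS) *ᵥ x))
      = fun x : Fin N → ℝ => (Real.sqrt ((2 * Real.pi) ^ N * S.det))⁻¹ *
          ∏ i, Real.exp (-(1/2) * (x i)^2) := by
    funext x; exact gDen_comp S hS a x
  rw [this]
  exact (Integrable.fintype_prod (f := fun _ : Fin N => fun t : ℝ =>
    Real.exp (-(1/2) * t^2)) (fun i => intg_gauss1)).const_mul _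

lemma gDen_integral (hS : S.PosDef) : ∫ x, gDen S a x = 1 := by
  rw [aff_integral (sqA_det_ne_zero S hS) a]
  have : (fun x => gDen S a (a + (sqA S hS) *ᵥ x))
      = fun x : Fin N → ℝ => (Real.sqrt ((2 * Real.pi) ^ N * S.det))⁻¹ *
          ∏ i, Real.exp (-(1/2) * (x i)^2) := by
    funext x; exact gDen_comp S hS a x
  rw [this, integral_const_mul, MeasureTheory.volume_pi, integral_fintype_prod_eq_pow (ι := Fin N)
    (fun t : ℝ => Real.exp (-(1/2) * t^2)), int_gauss1, sqA_abs_det, const_val, Fintype.card_fin]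
  have h1 : (0:ℝ) < Real.sqrt (2 * Real.pi) := Real.sqrt_pos.mpr (by positivity)
  have h2 : (0:ℝ) < Real.sqrt S.det := Real.sqrt_pos.mpr hS.det_pos
  field_simp

lemma gDen_lin_integrable (hS : S.PosDef) (w : Fin N → ℝ) :
    Integrable (fun x => ((x - a) ⬝ᵥ w) * gDen S a x) volume := by
  rw [← aff_integrable_iff (sqA_det_ne_zero S hS) a]
  have heq : (fun x => ((a + (sqA S hS) *ᵥ x - a) ⬝ᵥ w) * gDen S a (a + (sqA S hS) *ᵥ x))
      = fun x : Fin N → ℝ => ∑ k, (((sqA S hS)ᵀ *ᵥ w) k * (Real.sqrt ((2 * Real.pi) ^ N * S.det))⁻¹) *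
          ∏ i, (if i = k then (x i) * Real.exp (-(1/2) * (x i)^2) else Real.exp (-(1/2) * (x i)^2)) := by
    funext x
    rw [add_sub_cancel_left, gDen_comp S hS a x, mulVec_dot]
    unfold dotProduct
    rw [Finset.sum_mul]
    congr 1; funext k
    rw [show (∏ i, (if i = k then (x i) * Real.exp (-(1/2) * (x i)^2) else Real.exp (-(1/2) * (x i)^2)))
        = (x k) * ∏ i, Real.exp (-(1/2) * (x i)^2) by
      have : ∀ i : Fin N, (if i = k then (x i) * Real.exp (-(1/2) * (x i)^2)
          else Real.exp (-(1/2) * (x i)^2))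
          = (if i = k then x i else 1) * Real.exp (-(1/2) * (x i)^2) := by
        intro i; by_cases h : i = k <;> simp [h]
      rw [Finset.prod_congr rfl (fun i _ => this i), Finset.prod_mul_distrib,
        Finset.prod_ite_eq' Finset.univ k (fun i => x i)]
      simp]
    ring
  rw [heq]
  apply integrable_finset_sum
  intro k _
  exact (Integrable.fintype_prod (f := fun i : Fin N => fun t : ℝ =>
    if i = k then t * Real.exp (-(1/2) * t^2) else Real.exp (-(1/2) * t^2))
    (fun i => by
        by_cases h : i = k
        · simpa [h] using intg_gauss0
        · simpa [h] using intg_gauss1)).const_mul _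

lemma gDen_lin_integral (hS : S.PosDef) (w : Fin N → ℝ) :
    ∫ x, ((x - a) ⬝ᵥ w) * gDen S a x = 0 := by
  rw [aff_integral (sqA_det_ne_zero S hS) a
    (fun x => ((x - a) ⬝ᵥ w) * gDen S a x)]
  have heq : (fun x => ((a + (sqA S hS) *ᵥ x - a) ⬝ᵥ w) * gDen S a (a + (sqA S hS) *ᵥ x))
      = fun x : Fin N → ℝ => ∑ k, (((sqA S hS)ᵀ *ᵥ w) k * (Real.sqrt ((2 * Real.pi) ^ N * S.det))⁻¹) *
          ∏ i, (if i = k then (x i) * Real.exp (-(1/2) * (x i)^2) else Real.exp (-(1/2) * (x i)^2)) := by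
    funext x
    rw [add_sub_cancel_left, gDen_comp S hS a x, mulVec_dot]
    unfold dotProduct
    rw [Finset.sum_mul]
    congr 1; funext k
    rw [show (∏ i, (if i = k then (x i) * Real.exp (-(1/2) * (x i)^2) else Real.exp (-(1/2) * (x i)^2)))
        = (x k) * ∏ i, Real.exp (-(1/2) * (x i)^2) by
      have : ∀ i : Fin N, (if i = k then (x i) * Real.exp (-(1/2) * (x i)^2)
          else Real.exp (-(1/2) * (x i)^2))
          = (if i = k then x i else 1) * Real.exp (-(1/2) * (x i)^2) := by
        intro i; by_cases h : i = k <;> simp [h]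
      rw [Finset.prod_congr rfl (fun i _ => this i), Finset.prod_mul_distrib,
        Finset.prod_ite_eq' Finset.univ k (fun i => x i)]
      simp]
    ring
  rw [heq, integral_finset_sum]
  · have : ∀ k : Fin N, (∫ x : Fin N → ℝ,
        (((sqA S hS)ᵀ *ᵥ w) k * (Real.sqrt ((2 * Real.pi) ^ N * S.det))⁻¹) *
          ∏ i, (if i = k then (x i) * Real.exp (-(1/2) * (x i)^2) else Real.exp (-(1/2) * (x i)^2))) = 0 := by
      intro k
      rw [integral_const_mul, MeasureTheory.volume_pi, integral_fintype_prod_eq_prod (ι := Fin N)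
        (fun i (t:ℝ) => if i = k then t * Real.exp (-(1/2) * t^2) else Real.exp (-(1/2) * t^2))]
      rw [Finset.prod_eq_zero (Finset.mem_univ k)]
      · ring
      · simpa using int_gauss0
    rw [Finset.sum_congr rfl (fun k _ => this k), Finset.sum_const_zero, mul_zero]
  · intro k _
    exact (Integrable.fintype_prod (f := fun i : Fin N => fun t : ℝ =>
      if i = k then t * Real.exp (-(1/2) * t^2) else Real.exp (-(1/2) * t^2))
      (fun i => by
        by_cases h : i = k
        · simpa [h] using intg_gauss0
        · simpa [h] using intg_gauss1)).const_mul _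

end integrals

-- generalized dot lemma
lemma mulVec_dot' {m n : ℕ} (A : Matrix (Fin m) (Fin n) ℝ) (x : Fin n → ℝ) (y : Fin m → ℝ) :
    (A *ᵥ x) ⬝ᵥ y = x ⬝ᵥ (Aᵀ *ᵥ y) := by
  rw [dotProduct_comm, Matrix.dotProduct_mulVec, ← Matrix.vecMul_transpose,
    Matrix.transpose_transpose, dotProduct_comm]

lemma quad_entry {m n : ℕ} (W : Matrix (Fin m) (Fin n) ℝ) (Q : Matrix (Fin m) (Fin m) ℝ)
    (j : Fin n) :
    (W *ᵥ Pi.single j 1) ⬝ᵥ (Q *ᵥ (W *ᵥ Pi.single j 1)) = (Wᵀ * Q * W) j j := by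
  rw [mulVec_dot', Matrix.mulVec_mulVec, Matrix.mulVec_mulVec]
  simp [Matrix.mulVec_single, single_dotProduct, Matrix.mul_assoc]

lemma mg_eq (a : Fin N → ℝ) (S : Matrix (Fin N) (Fin N) ℝ) :
    multivariateGaussian a S = volume.withDensity fun x => ENNReal.ofReal (gDen S a x) := rfl

lemma mg_prob (S : Matrix (Fin N) (Fin N) ℝ) (hS : S.PosDef) (a : Fin N → ℝ) :
    IsProbabilityMeasure (multivariateGaussian a S) := by
  constructor
  rw [mg_eq, withDensity_apply _ MeasurableSet.univ, setLIntegral_univ,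
    ← ofReal_integral_eq_lintegral_ofReal (gDen_integrable S a hS)
      (Filter.Eventually.of_forall fun x => (gDen_pos S hS a x).le),
    gDen_integral S a hS, ENNReal.ofReal_one]

lemma klDiv_mg (S : Matrix (Fin N) (Fin N) ℝ) (hS : S.PosDef) (a b : Fin N → ℝ) :
    klDiv (multivariateGaussian a S) (multivariateGaussian b S)
      = ENNReal.ofReal ((1/2) * ((a - b) ⬝ᵥ (S⁻¹ *ᵥ (a - b)))) := by
  have hSt : Sᵀ = S := by simpa [Matrix.IsHermitian, Matrix.conjTranspose_eq_transpose_of_trivial] using hS.1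
  set Q : Matrix (Fin N) (Fin N) ℝ := S⁻¹ with hQ
  have hQs : Qᵀ = Q := by rw [hQ, Matrix.transpose_nonsing_inv, hSt]
  set v : Fin N → ℝ := a - b with hv
  set μ := multivariateGaussian a S with hμ
  set ν := multivariateGaussian b S with hν
  haveI : IsProbabilityMeasure μ := mg_prob S hS a
  haveI : IsProbabilityMeasure ν := mg_prob S hS b
  have hgc : Continuous (gDen S a) := gDen_continuous S a
  have hhc : Continuous (gDen S b) := gDen_continuous S b
  have hgm : Measurable fun x => ENNReal.ofReal (gDen S a x) :=
    hgc.measurable.ennreal_ofReal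
  have hhm : Measurable fun x => ENNReal.ofReal (gDen S b x) :=
    hhc.measurable.ennreal_ofReal
  have hrm : Measurable fun x => ENNReal.ofReal (gDen S a x / gDen S b x) :=
    (hgc.div hhc fun x => (gDen_pos S hS b x).ne').measurable.ennreal_ofReal
  have hμν : μ = ν.withDensity (fun x => ENNReal.ofReal (gDen S a x / gDen S b x)) := by
    rw [hμ, hν, mg_eq, mg_eq, ← withDensity_mul _ hhm hrm]
    congr 1; funext x
    show ENNReal.ofReal (gDen S a x) = _
    simp only [Pi.mul_apply]
    rw [← ENNReal.ofReal_mul (gDen_pos S hS b x).le]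
    congr 1
    rw [mul_comm, div_mul_cancel₀ _ (gDen_pos S hS b x).ne']
  have hac : μ ≪ ν := by rw [hμν]; exact withDensity_absolutelyContinuous _ _
  have hrn : μ.rnDeriv ν =ᵐ[ν] fun x => ENNReal.ofReal (gDen S a x / gDen S b x) := by
    rw [hμν]; exact Measure.rnDeriv_withDensity ν hrm
  -- the quadratic expansion
  have hcross : ∀ u : Fin N → ℝ, v ⬝ᵥ (Q *ᵥ u) = u ⬝ᵥ (Q *ᵥ v) := by
    intro u
    rw [dotProduct_comm, mulVec_dot', hQs]
  have hexp : ∀ x : Fin N → ℝ, (x - b) ⬝ᵥ (Q *ᵥ (x - b))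
      = (x - a) ⬝ᵥ (Q *ᵥ (x - a)) + 2 * ((x - a) ⬝ᵥ (Q *ᵥ v)) + v ⬝ᵥ (Q *ᵥ v) := by
    intro x
    have hxb : x - b = (x - a) + v := by rw [hv]; abel
    rw [hxb, Matrix.mulVec_add, dotProduct_add, add_dotProduct,
      add_dotProduct, hcross (x - a)]
    ring
  set L : (Fin N → ℝ) → ℝ :=
    fun x => (x - a) ⬝ᵥ (Q *ᵥ v) + (1/2) * (v ⬝ᵥ (Q *ᵥ v)) with hL
  have hlog : ∀ x, Real.log (gDen S a x / gDen S b x) = L x := by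
    intro x
    unfold gDen
    have hc : (0:ℝ) < (Real.sqrt ((2 * Real.pi) ^ N * S.det))⁻¹ := by
      have hd := hS.det_pos
      have : (0:ℝ) < (2 * Real.pi) ^ N * S.det := by positivity
      positivity
    rw [mul_div_mul_left _ _ hc.ne',
      ← Real.exp_sub, Real.log_exp, hL]
    show -(1/2) * ((x - a) ⬝ᵥ (Q *ᵥ (x - a))) - -(1/2) * ((x - b) ⬝ᵥ (Q *ᵥ (x - b))) = _
    rw [hexp x]
    ring
  have hllr : MeasureTheory.llr μ ν =ᵐ[μ] L := by
    filter_upwards [hac.ae_le hrn] with x hx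
    unfold MeasureTheory.llr
    rw [hx, ENNReal.toReal_ofReal (div_nonneg (gDen_pos S hS a x).le (gDen_pos S hS b x).le), hlog x]
  -- integrability of L against μ
  have hLg : Integrable (fun x => L x * gDen S a x) volume := by
    have h1 : Integrable (fun x => ((x - a) ⬝ᵥ (Q *ᵥ v)) * gDen S a x) volume :=
      gDen_lin_integrable S a hS (Q *ᵥ v)
    have h2 : Integrable (fun x => ((1/2) * (v ⬝ᵥ (Q *ᵥ v))) * gDen S a x) volume :=
      (gDen_integrable S a hS).const_mul _
    have := h1.add h2
    apply this.congr
    filter_upwards with x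
    simp only [Pi.add_apply]
    ring
  have hIntL : Integrable L μ := by
    rw [hμ, mg_eq, integrable_withDensity_iff hgm
      (Filter.Eventually.of_forall fun x => ENNReal.ofReal_lt_top)]
    apply hLg.congr
    filter_upwards with x
    rw [ENNReal.toReal_ofReal (gDen_pos S hS a x).le]
  have hIll : Integrable (MeasureTheory.llr μ ν) μ := by
    exact (integrable_congr hllr).mpr hIntL
  -- the integral
  have hIntVal : ∫ x, MeasureTheory.llr μ ν x ∂μ = (1/2) * (v ⬝ᵥ (Q *ᵥ v)) := by
    rw [integral_congr_ae hllr]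
    have hd : μ = volume.withDensity fun x => ((Real.toNNReal (gDen S a x)) : ENNReal) := by
      rw [hμ, mg_eq]; rfl
    rw [hd, integral_withDensity_eq_integral_smul hgc.measurable.real_toNNReal L]
    have : (fun x => (Real.toNNReal (gDen S a x)) • L x)
        = fun x => ((x - a) ⬝ᵥ (Q *ᵥ v)) * gDen S a x
            + ((1/2) * (v ⬝ᵥ (Q *ᵥ v))) * gDen S a x := by
      funext x
      rw [NNReal.smul_def, Real.coe_toNNReal _ (gDen_pos S hS a x).le, smul_eq_mul, hL]
      ring
    rw [this, integral_add (gDen_lin_integrable S a hS (Q *ᵥ v))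
      ((gDen_integrable S a hS).const_mul _), gDen_lin_integral S a hS (Q *ᵥ v),
      integral_const_mul, gDen_integral S a hS]
    ring
  unfold klDiv
  rw [if_pos ⟨hac, hIll⟩, hIntVal]


/-- The posterior influence function of a standard multi-output Gaussian process:
contaminating the `j`-th observation by `δ` changes the marginal posterior over the
first output channel by a KL divergence of exactly `C₁ δ²` with
`C₁ = (1/2)[Ωᵀ Mᵀ S₁₁⁻¹ M Ω]_{jj} ≥ 0` independent of `δ`, which grows unboundedly
in `δ` whenever `C₁ > 0`: the MOGP is not robust to outliers. -/
theorem mogp_pif_quadratic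
    (N D : ℕ) (hN : 0 < N) (hD : 0 < D)
    (𝕂 : Matrix (Fin (N * D)) (Fin (N * D)) ℝ) (h𝕂 : 𝕂.IsSymm)
    (Δ : Matrix (Fin (N * D)) (Fin (N * D)) ℝ) (hΔ : Δ.IsDiag)
    (hG : IsUnit (𝕂 + Δ).det)
    (m₁ : Fin N → ℝ) (m y : Fin (N * D) → ℝ)
    (S₁₁ : Matrix (Fin N) (Fin N) ℝ) (hS₁₁ : S₁₁.PosDef)
    (j : Fin (N * D)) (δ : ℝ) :
    0 ≤ (1 / 2 : ℝ) *
        (((𝕂 + Δ)⁻¹ᵀ * (𝕂.submatrix (Fin.castLE (Nat.le_mul_of_pos_right N hD)) id)ᵀ *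
            S₁₁⁻¹ * 𝕂.submatrix (Fin.castLE (Nat.le_mul_of_pos_right N hD)) id *
            (𝕂 + Δ)⁻¹) j j) ∧
    klDiv
        (multivariateGaussian
          (m₁ + (𝕂.submatrix (Fin.castLE (Nat.le_mul_of_pos_right N hD)) id * (𝕂 + Δ)⁻¹) *ᵥ
            (y - m)) S₁₁)
        (multivariateGaussian
          (m₁ + (𝕂.submatrix (Fin.castLE (Nat.le_mul_of_pos_right N hD)) id * (𝕂 + Δ)⁻¹) *ᵥ
            ((y + δ • (Pi.single j 1 : Fin (N * D) → ℝ)) - m)) S₁₁)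
      = ENNReal.ofReal
          ((1 / 2 : ℝ) *
            (((𝕂 + Δ)⁻¹ᵀ * (𝕂.submatrix (Fin.castLE (Nat.le_mul_of_pos_right N hD)) id)ᵀ *
                S₁₁⁻¹ * 𝕂.submatrix (Fin.castLE (Nat.le_mul_of_pos_right N hD)) id *
                (𝕂 + Δ)⁻¹) j j) * δ ^ 2) := by
  set M : Matrix (Fin N) (Fin (N * D)) ℝ :=
    𝕂.submatrix (Fin.castLE (Nat.le_mul_of_pos_right N hD)) id with hM
  set Ω : Matrix (Fin (N * D)) (Fin (N * D)) ℝ := (𝕂 + Δ)⁻¹ with hΩ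
  set W : Matrix (Fin N) (Fin (N * D)) ℝ := M * Ω with hWdef
  set Q : Matrix (Fin N) (Fin N) ℝ := S₁₁⁻¹ with hQdef
  have hW : Wᵀ * Q * W = Ωᵀ * Mᵀ * Q * M * Ω := by
    rw [hWdef, Matrix.transpose_mul, Matrix.mul_assoc (Ωᵀ * Mᵀ * Q)]
  set u : Fin N → ℝ := W *ᵥ Pi.single j 1 with hu
  have hentry : u ⬝ᵥ (Q *ᵥ u) = (Ωᵀ * Mᵀ * Q * M * Ω) j j := by
    rw [hu, quad_entry, hW]
  have h0 : 0 ≤ (Ωᵀ * Mᵀ * Q * M * Ω) j j := by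
    rw [← hentry]
    have := hS₁₁.inv.posSemidef.dotProduct_mulVec_nonneg u
    simpa using this
  refine ⟨mul_nonneg (by norm_num) h0, ?_⟩
  rw [klDiv_mg S₁₁ hS₁₁]
  congr 1
  have hab : (m₁ + W *ᵥ (y - m)) - (m₁ + W *ᵥ ((y + δ • (Pi.single j 1 : Fin (N * D) → ℝ)) - m))
      = (-δ) • u := by
    rw [add_sub_add_left_eq_sub, ← Matrix.mulVec_sub,
      show (y - m) - ((y + δ • (Pi.single j 1 : Fin (N * D) → ℝ)) - m)
        = -(δ • (Pi.single j 1 : Fin (N * D) → ℝ)) by abel,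
      Matrix.mulVec_neg, Matrix.mulVec_smul, hu, neg_smul, ← neg_smul]
  rw [hab, Matrix.mulVec_smul, smul_dotProduct, dotProduct_smul, hentry]
  simp only [smul_eq_mul]
  ring
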